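/- arXiv:2511.06302 — 9 statements merged into one kernel-verified Lean document; each statement's English description precedes it below -/
import Mathlib

section
/- Let n ≥ 1, let A, B be n×n complex matrices, let m : ℂ → ℂ and μ ∈ ℂ with m(p+μ−1) ≠ 0 for every natural number p, and set r(p) := m(p+μ)/m(p+μ−1). Assume B·s₀ = r(0)·s₀, that r(p)·I − B is invertible for each p ≥ 1, and that there exists C > 0 with ‖(r(p)·I − B)⁻¹‖ ≤ C for all p ≥ 1, where ‖·‖ is the operator norm on n×n complex matrices induced by the Euclidean norm on ℂⁿ. Define s_p := (r(p)·I − B)⁻¹·A·s_{p−1} for p ≥ 1. Then ‖s_p‖ ≤ ‖s₀‖·(C·‖A‖)^p for every p ≥ 0, and consequently there exists ρ > 0 such that the series Σ_{p≥0} ‖s_p‖·ρ^p is summable; in particular the power series Σ_{p≥0} s_p z^p has positive radius of convergence, so the Floquet solution Σ_{p≥0} s_p z^{p+μ} of z∂_m y = (zA+B)y is convergent near the origin. -/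
/-- The Euclidean norm of a vector in `ℂⁿ`. -/
noncomputable def vecNorm {n : ℕ} (v : Fin n → ℂ) : ℝ :=
  ‖(WithLp.equiv 2 (Fin n → ℂ)).symm v‖

/-- The operator norm on `n×n` complex matrices induced by the Euclidean norm on `ℂⁿ`. -/
noncomputable def matNorm {n : ℕ} (M : Matrix (Fin n) (Fin n) ℂ) : ℝ :=
  ‖Matrix.toEuclideanCLM (𝕜 := ℂ) (n := Fin n) M‖

lemma vecNorm_nonneg {n : ℕ} (v : Fin n → ℂ) : 0 ≤ vecNorm v := norm_nonneg _
lemma matNorm_nonneg {n : ℕ} (M : Matrix (Fin n) (Fin n) ℂ) : 0 ≤ matNorm M := norm_nonneg _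

lemma vecNorm_mulVec_le {n : ℕ} (M : Matrix (Fin n) (Fin n) ℂ) (v : Fin n → ℂ) :
    vecNorm (M.mulVec v) ≤ matNorm M * vecNorm v := by
  have h : (WithLp.equiv 2 (Fin n → ℂ)).symm (M.mulVec v) =
      Matrix.toEuclideanCLM (𝕜 := ℂ) (n := Fin n) M ((WithLp.equiv 2 (Fin n → ℂ)).symm v) := by
    rfl
  rw [vecNorm, h]
  exact (Matrix.toEuclideanCLM (𝕜 := ℂ) (n := Fin n) M).le_opNorm _


/-- Under a uniform bound `‖(r(p)·I − B)⁻¹‖ ≤ C`, the Floquet coefficients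
`s_p = (r(p)·I − B)⁻¹·A·s_{p−1}` satisfy `‖s_p‖ ≤ ‖s₀‖·(C·‖A‖)^p`, and therefore there is
`ρ > 0` with `Σ ‖s_p‖·ρ^p` summable, i.e. the Floquet solution converges near the origin. -/
theorem stmt2 (n : ℕ) (hn : 1 ≤ n) (A B : Matrix (Fin n) (Fin n) ℂ)
    (m : ℂ → ℂ) (μ : ℂ) (hm : ∀ p : ℕ, m ((p : ℂ) + μ - 1) ≠ 0)
    (r : ℕ → ℂ) (hr : ∀ p : ℕ, r p = m ((p : ℂ) + μ) / m ((p : ℂ) + μ - 1))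
    (s : ℕ → Fin n → ℂ)
    (hs0 : B.mulVec (s 0) = r 0 • s 0)
    (hinv : ∀ p : ℕ, 1 ≤ p → IsUnit (r p • (1 : Matrix (Fin n) (Fin n) ℂ) - B))
    (C : ℝ) (hC : 0 < C)
    (hbound : ∀ p : ℕ, 1 ≤ p →
      matNorm ((r p • (1 : Matrix (Fin n) (Fin n) ℂ) - B)⁻¹) ≤ C)
    (hs : ∀ p : ℕ, 1 ≤ p →
      s p = (r p • (1 : Matrix (Fin n) (Fin n) ℂ) - B)⁻¹.mulVec (A.mulVec (s (p - 1)))) :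
    (∀ p : ℕ, vecNorm (s p) ≤ vecNorm (s 0) * (C * matNorm A) ^ p) ∧
    ∃ ρ : ℝ, 0 < ρ ∧ Summable (fun p : ℕ => vecNorm (s p) * ρ ^ p) := by
  have key : ∀ p : ℕ, vecNorm (s p) ≤ vecNorm (s 0) * (C * matNorm A) ^ p := by
    intro p
    induction p with
    | zero => simp
    | succ q ih =>
      have h1 := hs (q + 1) (Nat.le_add_left 1 q)
      have step : vecNorm (s (q + 1)) ≤ C * matNorm A * vecNorm (s q) := by
        rw [h1]
        simp only [Nat.add_sub_cancel]
        calc vecNorm ((r (q+1) • (1 : Matrix (Fin n) (Fin n) ℂ) - B)⁻¹.mulVec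
              (A.mulVec (s q)))
            ≤ matNorm ((r (q+1) • (1 : Matrix (Fin n) (Fin n) ℂ) - B)⁻¹) *
              vecNorm (A.mulVec (s q)) := vecNorm_mulVec_le _ _
          _ ≤ C * (matNorm A * vecNorm (s q)) := by
              apply mul_le_mul (hbound _ (Nat.le_add_left 1 q)) (vecNorm_mulVec_le _ _)
                (vecNorm_nonneg _) hC.le
          _ = C * matNorm A * vecNorm (s q) := by ring
      calc vecNorm (s (q + 1)) ≤ C * matNorm A * vecNorm (s q) := step
        _ ≤ C * matNorm A * (vecNorm (s 0) * (C * matNorm A) ^ q) :=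
            mul_le_mul_of_nonneg_left ih (mul_nonneg hC.le (matNorm_nonneg A))
        _ = vecNorm (s 0) * (C * matNorm A) ^ (q + 1) := by ring
  have hCA : 0 ≤ C * matNorm A := mul_nonneg hC.le (matNorm_nonneg A)
  have hden : (0:ℝ) < 2 * (C * matNorm A + 1) := by linarith
  refine ⟨key, (2 * (C * matNorm A + 1))⁻¹, inv_pos.mpr hden, ?_⟩
  set ρ : ℝ := (2 * (C * matNorm A + 1))⁻¹ with hρ
  have hρpos : 0 < ρ := inv_pos.mpr hden
  have hlt : C * matNorm A * ρ < 1 := by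
    rw [hρ, mul_inv_lt_iff₀ hden, one_mul]
    linarith
  have hnn : 0 ≤ C * matNorm A * ρ := mul_nonneg hCA hρpos.le
  have hgeo : Summable (fun p : ℕ => vecNorm (s 0) * (C * matNorm A * ρ) ^ p) :=
    (summable_geometric_of_lt_one hnn hlt).mul_left _
  apply hgeo.of_nonneg_of_le
  · intro p; exact mul_nonneg (vecNorm_nonneg _) (pow_nonneg hρpos.le _)
  · intro p
    have := key p
    calc vecNorm (s p) * ρ ^ p ≤ vecNorm (s 0) * (C * matNorm A) ^ p * ρ ^ p := by
          exact mul_le_mul_of_nonneg_right this (pow_nonneg hρpos.le _)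
      _ = vecNorm (s 0) * (C * matNorm A * ρ) ^ p := by rw [mul_pow]; ring
end

section
/- Let n ≥ 1, let A, B be commuting n×n complex matrices (AB = BA), λ ∈ ℂ, m : ℂ → ℂ and μ ∈ ℂ with m(p+μ−1) ≠ 0 for every natural p; set r(p) := m(p+μ)/m(p+μ−1). Assume r(k)·I − B is invertible and r(k) ≠ r(0) for every k ≥ 1, and let s₀ ∈ ℂⁿ with B·s₀ = r(0)·s₀. Define ŝ₀ := I, ŝ_k := (r(k)·I − B)⁻¹·(A − λI)·ŝ_{k−1} (k ≥ 1); h₀ := I and h_p := (r(p) − r(0))⁻¹ · Σ_{j=0}^{p−1} h_j·(λ·ŝ_{p−j−1} − (r(p) − r(p−j))·ŝ_{p−j}) for p ≥ 1; s̃_p := ŝ_p·s₀ and y_p := Σ_{j=0}^{p} h_j·s̃_{p−j}. Then y is a Floquet coefficient sequence with exponent μ for the original system: B·y₀ = r(0)·y₀ and, for every p ≥ 1, r(p)·y_p = A·y_{p−1} + B·y_p. (Thus y(z) = h(z)·ỹ(z) is a formal Floquet solution of z∂_m y = (zA+B)y whenever ỹ is the formal Floquet solution of z∂_m ỹ = (z(A−λI)+B)ỹ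 with leading coefficient s₀.) -/
/-- Auxiliary: a commuting element also commutes with the nonsingular inverse. -/
lemma commute_nonsing_inv {n : ℕ} {M X : Matrix (Fin n) (Fin n) ℂ} (hM : IsUnit M)
    (hc : M * X = X * M) : M⁻¹ * X = X * M⁻¹ := by
  have hd : IsUnit M.det := (Matrix.isUnit_iff_isUnit_det M).mp hM
  have h1 : M⁻¹ * M = 1 := Matrix.nonsing_inv_mul M hd
  have h2 : M * M⁻¹ = 1 := Matrix.mul_nonsing_inv M hd
  calc M⁻¹ * X = M⁻¹ * X * (M * M⁻¹) := by rw [h2, mul_one]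
    _ = M⁻¹ * (X * M) * M⁻¹ := by rw [← mul_assoc, mul_assoc M⁻¹ X M]
    _ = M⁻¹ * (M * X) * M⁻¹ := by rw [hc]
    _ = X * M⁻¹ := by rw [← mul_assoc, h1, one_mul]

/-- with `ŝ`, `h` defined by the recursions of Lemma `lematec`,
`s̃_p = ŝ_p·s₀` and `y_p = Σ_{j=0}^p h_j·s̃_{p−j}` (Cauchy product `y = h·ỹ`), the
sequence `y` is a Floquet coefficient sequence with exponent `μ` for the original
system: `B·y₀ = r(0)·y₀` and `r(p)·y_p = A·y_{p−1} + B·y_p` for all `p ≥ 1`. -/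
theorem stmt6 (n : ℕ) (hn : 1 ≤ n) (A B : Matrix (Fin n) (Fin n) ℂ)
    (hAB : A * B = B * A) (lam : ℂ)
    (m : ℂ → ℂ) (μ : ℂ) (hm : ∀ p : ℕ, m ((p : ℂ) + μ - 1) ≠ 0)
    (r : ℕ → ℂ) (hr : ∀ p : ℕ, r p = m ((p : ℂ) + μ) / m ((p : ℂ) + μ - 1))
    (hinv : ∀ p : ℕ, 1 ≤ p → IsUnit (r p • (1 : Matrix (Fin n) (Fin n) ℂ) - B))
    (hne : ∀ p : ℕ, 1 ≤ p → r p ≠ r 0)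
    (s0 : Fin n → ℂ) (hs0 : B.mulVec s0 = r 0 • s0)
    (sh : ℕ → Matrix (Fin n) (Fin n) ℂ) (hsh0 : sh 0 = 1)
    (hshk : ∀ p : ℕ, 1 ≤ p →
      sh p = (r p • (1 : Matrix (Fin n) (Fin n) ℂ) - B)⁻¹ * (A - lam • 1) * sh (p - 1))
    (h : ℕ → Matrix (Fin n) (Fin n) ℂ) (hh0 : h 0 = 1)
    (hhp : ∀ p : ℕ, 1 ≤ p → h p = (r p - r 0)⁻¹ •
      ∑ j ∈ Finset.range p, h j * (lam • sh (p - j - 1) - (r p - r (p - j)) • sh (p - j)))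
    (st : ℕ → Fin n → ℂ) (hst : ∀ p : ℕ, st p = (sh p).mulVec s0)
    (y : ℕ → Fin n → ℂ)
    (hy : ∀ p : ℕ, y p = ∑ j ∈ Finset.range (p + 1), (h j).mulVec (st (p - j))) :
    B.mulVec (y 0) = r 0 • y 0 ∧
    ∀ p : ℕ, 1 ≤ p → r p • y p = A.mulVec (y (p - 1)) + B.mulVec (y p) := by
  -- commutation of A and B with sh k
  have csh : ∀ k : ℕ, (A * sh k = sh k * A) ∧ (B * sh k = sh k * B) := by
    intro k
    induction k with
    | zero => simp [hsh0]
    | succ k ih =>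
      have hrec : sh (k + 1) =
          (r (k+1) • (1 : Matrix (Fin n) (Fin n) ℂ) - B)⁻¹ * (A - lam • 1) * sh k := by
        simpa using hshk (k+1) (by omega)
      have hu := hinv (k+1) (by omega)
      have cA1 : (r (k+1) • (1 : Matrix (Fin n) (Fin n) ℂ) - B) * A =
          A * (r (k+1) • (1 : Matrix (Fin n) (Fin n) ℂ) - B) := by
        simp [sub_mul, mul_sub, smul_mul_assoc, mul_smul_comm, hAB]
      have cB1 : (r (k+1) • (1 : Matrix (Fin n) (Fin n) ℂ) - B) * B =
          B * (r (k+1) • (1 : Matrix (Fin n) (Fin n) ℂ) - B) := by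
        simp [sub_mul, mul_sub, smul_mul_assoc, mul_smul_comm]
      have cAi := commute_nonsing_inv hu cA1
      have cBi := commute_nonsing_inv hu cB1
      have cAD : A * (A - lam • 1) = (A - lam • 1) * A := by
        simp [sub_mul, mul_sub, smul_mul_assoc, mul_smul_comm]
      have cBD : B * (A - lam • 1) = (A - lam • 1) * B := by
        simp [sub_mul, mul_sub, smul_mul_assoc, mul_smul_comm, hAB]
      have c1A : Commute A ((r (k+1) • (1:Matrix (Fin n) (Fin n) ℂ) - B)⁻¹) := cAi.symm
      have c1B : Commute B ((r (k+1) • (1:Matrix (Fin n) (Fin n) ℂ) - B)⁻¹) := cBi.symm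
      have c2A : Commute A (A - lam • (1:Matrix (Fin n) (Fin n) ℂ)) := cAD
      have c2B : Commute B (A - lam • (1:Matrix (Fin n) (Fin n) ℂ)) := cBD
      have c3A : Commute A (sh k) := ih.1
      have c3B : Commute B (sh k) := ih.2
      constructor
      · rw [hrec]; exact ((c1A.mul_right c2A).mul_right c3A).eq
      · rw [hrec]; exact ((c1B.mul_right c2B).mul_right c3B).eq
  -- the basic recursion for sh in solved form
  have key : ∀ k : ℕ, 1 ≤ k → B * sh k = r k • sh k - (A - lam • 1) * sh (k - 1) := by
    intro k hk
    have hu := hinv k hk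
    have hd := (Matrix.isUnit_iff_isUnit_det _).mp hu
    have e1 : (r k • (1 : Matrix (Fin n) (Fin n) ℂ) - B) * sh k = (A - lam • 1) * sh (k - 1) := by
      rw [hshk k hk, ← mul_assoc, ← mul_assoc, Matrix.mul_nonsing_inv _ hd, one_mul]
    have e2 : r k • sh k - B * sh k = (A - lam • 1) * sh (k - 1) := by
      rw [← e1, sub_mul, smul_mul_assoc, one_mul]
    rw [← e2]; abel
  -- commutation of A and B with h j
  have ch : ∀ j : ℕ, (A * h j = h j * A) ∧ (B * h j = h j * B) := by
    intro j
    induction j using Nat.strong_induction_on with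
    | _ j ih =>
      rcases Nat.eq_zero_or_pos j with h0 | hj
      · subst h0; simp [hh0]
      · rw [hhp j hj]
        constructor
        · rw [mul_smul_comm, smul_mul_assoc, Finset.mul_sum, Finset.sum_mul]
          congr 1
          apply Finset.sum_congr rfl
          intro k hk
          have hk' := Finset.mem_range.mp hk
          rw [← mul_assoc, (ih k hk').1, mul_assoc, mul_assoc]
          congr 1
          simp [mul_sub, sub_mul, mul_smul_comm, smul_mul_assoc, (csh _).1]
        · rw [mul_smul_comm, smul_mul_assoc, Finset.mul_sum, Finset.sum_mul]
          congr 1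
          apply Finset.sum_congr rfl
          intro k hk
          have hk' := Finset.mem_range.mp hk
          rw [← mul_assoc, (ih k hk').2, mul_assoc, mul_assoc]
          congr 1
          simp [mul_sub, sub_mul, mul_smul_comm, smul_mul_assoc, (csh _).2]
  -- sums as a single matrix applied to s0
  have sum_mulVec : ∀ (s : Finset ℕ) (f : ℕ → Matrix (Fin n) (Fin n) ℂ),
      (∑ j ∈ s, f j).mulVec s0 = ∑ j ∈ s, (f j).mulVec s0 := by
    intro s f
    induction s using Finset.cons_induction with
    | empty => simp [Matrix.zero_mulVec]
    | cons a s ha ih => rw [Finset.sum_cons, Finset.sum_cons, Matrix.add_mulVec, ih]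
  have hyS : ∀ q : ℕ, y q = (∑ j ∈ Finset.range (q+1), h j * sh (q - j)).mulVec s0 := by
    intro q
    rw [hy q, sum_mulVec]
    apply Finset.sum_congr rfl
    intro j _
    rw [hst, Matrix.mulVec_mulVec]
  -- main matrix identity
  have main : ∀ p : ℕ, 1 ≤ p →
      r p • (∑ j ∈ Finset.range (p+1), h j * sh (p - j))
        - B * (∑ j ∈ Finset.range (p+1), h j * sh (p - j))
        - A * (∑ j ∈ Finset.range (p-1+1), h j * sh (p-1 - j))
      = h p * (r 0 • (1 : Matrix (Fin n) (Fin n) ℂ) - B) := by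
    intro p hp
    have hp1 : p - 1 + 1 = p := Nat.succ_pred_eq_of_pos hp
    rw [hp1, Finset.sum_range_succ, Nat.sub_self, hsh0, mul_one]
    have hB : B * (∑ j ∈ Finset.range p, h j * sh (p - j)) =
        ∑ j ∈ Finset.range p, h j * (r (p-j) • sh (p-j) - (A - lam • 1) * sh (p-j-1)) := by
      rw [Finset.mul_sum]
      apply Finset.sum_congr rfl
      intro j hj
      have hj' := Finset.mem_range.mp hj
      have h1 : 1 ≤ p - j := by omega
      rw [← mul_assoc, (ch j).2, mul_assoc, key (p-j) h1]
    have hA : A * (∑ j ∈ Finset.range p, h j * sh (p-1 - j)) =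
        ∑ j ∈ Finset.range p, h j * (A * sh (p-j-1)) := by
      rw [Finset.mul_sum]
      apply Finset.sum_congr rfl
      intro j hj
      have he : p - 1 - j = p - j - 1 := by omega
      rw [he, ← mul_assoc, (ch j).1, mul_assoc]
    have hsum : (∑ j ∈ Finset.range p,
        h j * (lam • sh (p - j - 1) - (r p - r (p - j)) • sh (p - j))) = (r p - r 0) • h p := by
      rw [hhp p hp, smul_smul, mul_inv_cancel₀ (sub_ne_zero.mpr (hne p hp)), one_smul]
    have key2 : r p • (∑ j ∈ Finset.range p, h j * sh (p - j))
        - B * (∑ j ∈ Finset.range p, h j * sh (p - j))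
        - A * (∑ j ∈ Finset.range p, h j * sh (p-1 - j))
        = -((r p - r 0) • h p) := by
      rw [hB, hA, Finset.smul_sum, ← Finset.sum_sub_distrib, ← Finset.sum_sub_distrib]
      rw [show (∑ j ∈ Finset.range p,
            (r p • (h j * sh (p - j)) - h j * (r (p-j) • sh (p-j) - (A - lam • 1) * sh (p-j-1))
              - h j * (A * sh (p-j-1))))
          = ∑ j ∈ Finset.range p,
            -(h j * (lam • sh (p - j - 1) - (r p - r (p - j)) • sh (p - j))) from
        Finset.sum_congr rfl (by
          intro j hj
          simp only [mul_sub, sub_mul, smul_mul_assoc, mul_smul_comm, one_mul, mul_one]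
          module)]
      rw [← hsum]
      rw [Finset.sum_neg_distrib]
    have cB := (ch p).2
    calc r p • ((∑ j ∈ Finset.range p, h j * sh (p - j)) + h p)
        - B * ((∑ j ∈ Finset.range p, h j * sh (p - j)) + h p)
        - A * (∑ j ∈ Finset.range p, h j * sh (p-1 - j))
        = (r p • (∑ j ∈ Finset.range p, h j * sh (p - j))
            - B * (∑ j ∈ Finset.range p, h j * sh (p - j))
            - A * (∑ j ∈ Finset.range p, h j * sh (p-1 - j)))
          + (r p • h p - B * h p) := by rw [smul_add, mul_add]; abel
      _ = -((r p - r 0) • h p) + (r p • h p - h p * B) := by rw [key2, cB]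
      _ = r 0 • h p - h p * B := by module
      _ = h p * (r 0 • (1 : Matrix (Fin n) (Fin n) ℂ) - B) := by
          rw [mul_sub, mul_smul_comm, mul_one]
  constructor
  · have hy0 : y 0 = s0 := by
      rw [hy 0]
      simp [hst, hsh0, hh0, Matrix.one_mulVec]
    rw [hy0, hs0]
  · intro p hp
    have hz : ((r 0 : ℂ) • (1 : Matrix (Fin n) (Fin n) ℂ) - B).mulVec s0 = 0 := by
      rw [Matrix.sub_mulVec, Matrix.smul_mulVec, Matrix.one_mulVec, hs0, sub_self]
    have hm2 : r p • (∑ j ∈ Finset.range (p+1), h j * sh (p - j)) =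
        A * (∑ j ∈ Finset.range (p-1+1), h j * sh (p-1 - j))
        + B * (∑ j ∈ Finset.range (p+1), h j * sh (p - j))
        + h p * (r 0 • (1 : Matrix (Fin n) (Fin n) ℂ) - B) := by
      rw [← main p hp]; abel
    rw [hyS p, hyS (p-1), ← Matrix.smul_mulVec, hm2]
    rw [Matrix.add_mulVec, Matrix.add_mulVec, ← Matrix.mulVec_mulVec, ← Matrix.mulVec_mulVec,
      ← Matrix.mulVec_mulVec, hz, Matrix.mulVec_zero, add_zero]
end

section
/- Let n ≥ 1, let A, B be commuting n×n complex matrices (AB = BA), λ ∈ ℂ, m : ℂ → ℂ and μ ∈ ℂ with m(p+μ−1) ≠ 0 for every natural p; set r(p) := m(p+μ)/m(p+μ−1). Assume r(k)·I − B is invertible for every k ≥ 1 and that there exists C > 0 with ‖(r(k)·I − B)⁻¹‖ ≤ C for all k ≥ 1, where ‖·‖ is the operator norm induced by the Euclidean norm. Define ŝ₀ := I and ŝ_k := (r(k)·I − B)⁻¹·(A − λI)·ŝ_{k−1} for k ≥ 1, and let s₀ ∈ ℂⁿ with B·s₀ = r(0)·s₀. Then ‖ŝ_p‖ ≤ (C·‖A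 − λI‖)^p for every p ≥ 1, and consequently there exists ρ > 0 such that Σ_{p≥0} ‖ŝ_p·s₀‖·ρ^p is summable; in particular the Floquet series Σ_{p≥0} ŝ_p·s₀·z^{p+μ} is convergent near the origin. -/
lemma matNorm_mul_le {n : ℕ} (M N : Matrix (Fin n) (Fin n) ℂ) :
    matNorm (M * N) ≤ matNorm M * matNorm N := by
  rw [matNorm, matNorm, matNorm, map_mul]
  exact norm_mul_le _ _

lemma matNorm_one_le {n : ℕ} : matNorm (1 : Matrix (Fin n) (Fin n) ℂ) ≤ 1 := by
  rw [matNorm, map_one, ContinuousLinearMap.one_def]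
  exact ContinuousLinearMap.norm_id_le

/-- under the uniform bound `‖(r(k)·I − B)⁻¹‖ ≤ C`, the matrices
`ŝ_p = (r(p)·I − B)⁻¹·(A − λI)·ŝ_{p−1}` satisfy `‖ŝ_p‖ ≤ (C·‖A − λI‖)^p`, and hence
there is `ρ > 0` with `Σ ‖ŝ_p·s₀‖·ρ^p` summable: the Floquet series `Σ ŝ_p·s₀·z^{p+μ}`
converges near the origin. -/
theorem stmt8 (n : ℕ) (hn : 1 ≤ n) (A B : Matrix (Fin n) (Fin n) ℂ)
    (hAB : A * B = B * A) (lam : ℂ)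
    (m : ℂ → ℂ) (μ : ℂ) (hm : ∀ p : ℕ, m ((p : ℂ) + μ - 1) ≠ 0)
    (r : ℕ → ℂ) (hr : ∀ p : ℕ, r p = m ((p : ℂ) + μ) / m ((p : ℂ) + μ - 1))
    (hinv : ∀ p : ℕ, 1 ≤ p → IsUnit (r p • (1 : Matrix (Fin n) (Fin n) ℂ) - B))
    (C : ℝ) (hC : 0 < C)
    (hbound : ∀ p : ℕ, 1 ≤ p →
      matNorm ((r p • (1 : Matrix (Fin n) (Fin n) ℂ) - B)⁻¹) ≤ C)
    (sh : ℕ → Matrix (Fin n) (Fin n) ℂ) (hsh0 : sh 0 = 1)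
    (hshk : ∀ p : ℕ, 1 ≤ p →
      sh p = (r p • (1 : Matrix (Fin n) (Fin n) ℂ) - B)⁻¹ * (A - lam • 1) * sh (p - 1))
    (s0 : Fin n → ℂ) (hs0 : B.mulVec s0 = r 0 • s0) :
    (∀ p : ℕ, 1 ≤ p → matNorm (sh p) ≤ (C * matNorm (A - lam • 1)) ^ p) ∧
    ∃ ρ : ℝ, 0 < ρ ∧ Summable (fun p : ℕ => vecNorm ((sh p).mulVec s0) * ρ ^ p) := by
  set K : ℝ := C * matNorm (A - lam • 1) with hK
  have hK0 : 0 ≤ K := mul_nonneg hC.le (matNorm_nonneg _)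
  have hkey : ∀ p : ℕ, matNorm (sh p) ≤ K ^ p := by
    intro p
    induction p with
    | zero => simpa [hsh0] using matNorm_one_le (n := n)
    | succ p ih =>
      have h1 : sh (p + 1) =
          (r (p + 1) • (1 : Matrix (Fin n) (Fin n) ℂ) - B)⁻¹ * (A - lam • 1) * sh p := by
        simpa using hshk (p + 1) (Nat.le_add_left 1 p)
      calc matNorm (sh (p + 1))
          ≤ matNorm ((r (p + 1) • (1 : Matrix (Fin n) (Fin n) ℂ) - B)⁻¹ * (A - lam • 1)) *
            matNorm (sh p) := by rw [h1]; exact matNorm_mul_le _ _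
        _ ≤ (matNorm ((r (p + 1) • (1 : Matrix (Fin n) (Fin n) ℂ) - B)⁻¹) *
              matNorm (A - lam • 1)) * matNorm (sh p) := by
            exact mul_le_mul_of_nonneg_right (matNorm_mul_le _ _) (matNorm_nonneg _)
        _ ≤ (C * matNorm (A - lam • 1)) * K ^ p := by
            apply mul_le_mul _ ih (matNorm_nonneg _)
              (mul_nonneg hC.le (matNorm_nonneg _))
            exact mul_le_mul_of_nonneg_right (hbound (p + 1) (Nat.le_add_left 1 p))
              (matNorm_nonneg _)
        _ = K ^ (p + 1) := by rw [hK, pow_succ]; ring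
  refine ⟨fun p _ => hkey p, ?_⟩
  refine ⟨1 / (2 * (K + 1)), by positivity, ?_⟩
  set ρ : ℝ := 1 / (2 * (K + 1)) with hρ
  have hρ0 : 0 ≤ ρ := by positivity
  have hKρ : K * ρ ≤ 1 / 2 := by
    rw [hρ, mul_one_div, div_le_div_iff₀ (by positivity) (by norm_num)]
    nlinarith
  have hterm : ∀ p : ℕ, vecNorm ((sh p).mulVec s0) * ρ ^ p ≤ vecNorm s0 * (1 / 2) ^ p := by
    intro p
    have h1 : vecNorm ((sh p).mulVec s0) ≤ K ^ p * vecNorm s0 :=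
      (vecNorm_mulVec_le _ _).trans
        (mul_le_mul_of_nonneg_right (hkey p) (norm_nonneg _))
    calc vecNorm ((sh p).mulVec s0) * ρ ^ p
        ≤ (K ^ p * vecNorm s0) * ρ ^ p :=
          mul_le_mul_of_nonneg_right h1 (pow_nonneg hρ0 p)
      _ = vecNorm s0 * (K * ρ) ^ p := by rw [mul_pow]; ring
      _ ≤ vecNorm s0 * (1 / 2) ^ p := by
          apply mul_le_mul_of_nonneg_left _ (norm_nonneg _)
          exact pow_le_pow_left₀ (mul_nonneg hK0 hρ0) hKρ p
  have hsum : Summable (fun p : ℕ => vecNorm s0 * (1 / 2) ^ p) :=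
    (summable_geometric_of_lt_one (by norm_num) (by norm_num)).mul_left _
  exact Summable.of_nonneg_of_le
    (fun p => mul_nonneg (norm_nonneg _) (pow_nonneg hρ0 p)) hterm hsum
end

section
/- Let n ≥ 1, let A, B be n×n complex matrices, λ ∈ ℂ, μ ∈ ℂ, and let m : ℂ → ℂ be such that m(k+μ)/m(k+μ−1) = k + μ for every natural number k (as happens for m(z) = Γ(1+z), i.e. the classical derivative), with m(k+μ−1) ≠ 0; set r(k) := k + μ. Assume (k+μ)·I − B is invertible for every k ≥ 1. Define ŝ₀ := I, ŝ_k := ((k+μ)·I − B)⁻¹·(A − λI)·ŝ_{k−1} for k ≥ 1, and h₀ := I, h_p := (r(p) − r(0))⁻¹ · Σ_{j=0}^{p−1} h_j·(λ·ŝ_{p−j−1} − (r(p) − r(p−j))·ŝ_{p−j}) for p ≥ 1 (note r(p) − r(0) = p and r(p) − r(p−j) = j). Then h_p = (λ^p/p!)·I for every p ≥ 0. -/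
/-- in the classical case, where `m(k+μ)/m(k+μ−1) = k+μ` (e.g.
`m(z) = Γ(1+z)`, the usual derivative), the matrices `h_p` of the change of variables
`y = h·ỹ` are `h_p = (λ^p/p!)·I`, i.e. `h(z) = e^{λz}·I`. -/
theorem stmt9 (n : ℕ) (hn : 1 ≤ n) (A B : Matrix (Fin n) (Fin n) ℂ) (lam : ℂ)
    (m : ℂ → ℂ) (μ : ℂ) (hm : ∀ k : ℕ, m ((k : ℂ) + μ - 1) ≠ 0)
    (hrat : ∀ k : ℕ, m ((k : ℂ) + μ) / m ((k : ℂ) + μ - 1) = (k : ℂ) + μ)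
    (r : ℕ → ℂ) (hr : ∀ k : ℕ, r k = (k : ℂ) + μ)
    (hinv : ∀ k : ℕ, 1 ≤ k →
      IsUnit ((((k : ℂ) + μ)) • (1 : Matrix (Fin n) (Fin n) ℂ) - B))
    (sh : ℕ → Matrix (Fin n) (Fin n) ℂ) (hsh0 : sh 0 = 1)
    (hshk : ∀ k : ℕ, 1 ≤ k →
      sh k = ((((k : ℂ) + μ)) • (1 : Matrix (Fin n) (Fin n) ℂ) - B)⁻¹ * (A - lam • 1) *
        sh (k - 1))
    (h : ℕ → Matrix (Fin n) (Fin n) ℂ) (hh0 : h 0 = 1)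
    (hhp : ∀ p : ℕ, 1 ≤ p → h p = (r p - r 0)⁻¹ •
      ∑ j ∈ Finset.range p, h j * (lam • sh (p - j - 1) - (r p - r (p - j)) • sh (p - j))) :
    ∀ p : ℕ, h p = (lam ^ p / (Nat.factorial p : ℂ)) • (1 : Matrix (Fin n) (Fin n) ℂ) := by
  intro p
  induction p using Nat.strong_induction_on with
  | _ p ih =>
    match p with
    | 0 => simpa using hh0
    | Nat.succ q =>
      set p := q + 1 with hp
      have hp1 : 1 ≤ p := Nat.le_add_left 1 q
      have hpc : (p : ℂ) ≠ 0 := Nat.cast_ne_zero.mpr (Nat.succ_ne_zero q)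
      -- telescoping function
      set F : ℕ → Matrix (Fin n) (Fin n) ℂ :=
        fun j => ((j : ℂ) * lam ^ j / (Nat.factorial j : ℂ)) • sh (p - j) with hF
      have key : ∀ j ∈ Finset.range p,
          h j * (lam • sh (p - j - 1) - (r p - r (p - j)) • sh (p - j))
            = F (j + 1) - F j := by
        intro j hj
        rw [Finset.mem_range] at hj
        have hrd : r p - r (p - j) = (j : ℂ) := by
          rw [hr, hr, Nat.cast_sub hj.le]; ring
        rw [ih j hj, hrd, hF]
        have h1 : p - (j + 1) = p - j - 1 := by omega
        have hfac : (Nat.factorial (j + 1) : ℂ) = ((j : ℂ) + 1) * (Nat.factorial j : ℂ) := by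
          rw [Nat.factorial_succ]; push_cast; ring
        have hfj : (Nat.factorial j : ℂ) ≠ 0 := Nat.cast_ne_zero.mpr (Nat.factorial_ne_zero j)
        have hc1 : ((j + 1 : ℕ) : ℂ) * lam ^ (j + 1) / (Nat.factorial (j + 1) : ℂ)
            = lam * (lam ^ j / (Nat.factorial j : ℂ)) := by
          rw [hfac]
          push_cast
          have : ((j : ℂ) + 1) ≠ 0 := by
            exact_mod_cast (Nat.cast_ne_zero (R := ℂ)).mpr (Nat.succ_ne_zero j)
          field_simp
          ring
        simp only [h1, hc1]
        rw [Matrix.smul_mul, Matrix.one_mul, smul_sub, smul_smul, smul_smul]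
        congr 1
        · congr 1; ring
        · congr 1; field_simp
      rw [hhp p hp1, Finset.sum_congr rfl key, Finset.sum_range_sub F]
      have hr0 : r p - r 0 = (p : ℂ) := by rw [hr, hr]; push_cast; ring
      rw [hr0, hF]
      simp only [Nat.sub_self, hsh0, Nat.cast_zero, zero_mul, zero_div, zero_smul, sub_zero,
        smul_smul]
      congr 1
      have hfp : (Nat.factorial p : ℂ) ≠ 0 := Nat.cast_ne_zero.mpr (Nat.factorial_ne_zero p)
      field_simp
      show lam ^ p = (Nat.factorial p : ℂ) * lam ^ p / (Nat.factorial p : ℂ)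
      rw [mul_div_cancel_left₀ _ hfp]
end

section
/- Let m : ℂ → ℂ and μ₁, μ₂ ∈ ℂ with m(p+μ₁−1) ≠ 0 and m(μ₂−1) ≠ 0 for all natural p; set r(p) := m(p+μ₁)/m(p+μ₁−1) and κ := m(μ₂)/m(μ₂−1), and β := r(0) − κ, assuming β ≠ 0, r(p) ≠ r(0) and r(p) ≠ κ for every p ≥ 1. Let a, b, c, d ∈ ℂ with b·c = a·d (i.e. det A = 0 for A = [[a,b],[c,d]]), λ := a + d ≠ 0, and α := aβ/λ. Define f₀ := 1, g₀ := 0 and, for p ≥ 1, f_p := (a·f_{p−1} + b·g_{p−1})/(r(p) − r(0)) and g_p := (c·f_{p−1} + d·g_{p−1})/(r(p) − κ). Then for every p ≥ 2: f_p = λ^p · ∏_{i=0}^{p−1}(r(i) − r(0) + α) / ( ∏_{i=1}^{p}(r(i) − r(0)) · ∏_{i=0}^{p−1}(r(i) − r(0) + β) ). -/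
/-- closed form of the coefficients `f_p` of the Floquet solution of the
planar system `z∂ₘy = (zA+B)y` with `B = diag(m(μ₁)/m(μ₁−1), m(μ₂)/m(μ₂−1))`,
`det A = 0` and `λ = a + d ≠ 0`:
`f_p = λ^p·∏_{i=0}^{p−1}(r(i)−r(0)+α) / (∏_{i=1}^{p}(r(i)−r(0))·∏_{i=0}^{p−1}(r(i)−r(0)+β))`
for `p ≥ 2`. -/
theorem stmt11 (m : ℂ → ℂ) (μ1 μ2 : ℂ)
    (hm1 : ∀ p : ℕ, m ((p : ℂ) + μ1 - 1) ≠ 0) (hm2 : m (μ2 - 1) ≠ 0)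
    (r : ℕ → ℂ) (hr : ∀ p : ℕ, r p = m ((p : ℂ) + μ1) / m ((p : ℂ) + μ1 - 1))
    (κ : ℂ) (hκ : κ = m μ2 / m (μ2 - 1))
    (β : ℂ) (hβ : β = r 0 - κ) (hβ0 : β ≠ 0)
    (hne1 : ∀ p : ℕ, 1 ≤ p → r p ≠ r 0) (hne2 : ∀ p : ℕ, 1 ≤ p → r p ≠ κ)
    (a b c d : ℂ) (hdet : b * c = a * d)
    (lam : ℂ) (hlam : lam = a + d) (hlam0 : lam ≠ 0)
    (α : ℂ) (hα : α = a * β / lam)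
    (f g : ℕ → ℂ) (hf0 : f 0 = 1) (hg0 : g 0 = 0)
    (hf : ∀ p : ℕ, 1 ≤ p → f p = (a * f (p - 1) + b * g (p - 1)) / (r p - r 0))
    (hg : ∀ p : ℕ, 1 ≤ p → g p = (c * f (p - 1) + d * g (p - 1)) / (r p - κ)) :
    ∀ p : ℕ, 2 ≤ p →
      f p = lam ^ p * (∏ i ∈ Finset.range p, (r i - r 0 + α)) /
        ((∏ i ∈ Finset.range p, (r (i + 1) - r 0)) *
          ∏ i ∈ Finset.range p, (r i - r 0 + β)) := by
  have hX : ∀ i : ℕ, r (i+1) - r 0 ≠ 0 := fun i => sub_ne_zero.mpr (hne1 (i+1) (by omega))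
  have hYκ : ∀ i : ℕ, r (i+1) - r 0 + β = r (i+1) - κ := fun i => by rw [hβ]; ring
  have hY : ∀ i : ℕ, r (i+1) - r 0 + β ≠ 0 := fun i => by
    rw [hYκ]; exact sub_ne_zero.mpr (hne2 (i+1) (by omega))
  have hαβ : lam * α = a * β := by rw [hα]; field_simp
  have cancel : ∀ W P D : ℂ, D ≠ 0 → (W / D) * (P * D) = W * P := fun W P D hD => by
    field_simp
  have key : ∀ p : ℕ, (a * f p + b * g p) *
      (∏ i ∈ Finset.range p, ((r (i+1) - r 0) * (r (i+1) - r 0 + β))) =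
      a * ∏ i ∈ Finset.range p, (lam * (r (i+1) - r 0 + α)) := by
    intro p
    induction p with
    | zero => simp [hf0, hg0]
    | succ q ih =>
      have hfq : f (q+1) = (a * f q + b * g q) / (r (q+1) - r 0) := by
        simpa using hf (q+1) (by omega)
      have hgq : g (q+1) = (c * f q + d * g q) / (r (q+1) - r 0 + β) := by
        rw [hYκ q]; simpa using hg (q+1) (by omega)
      have h1 := hX q
      have h2 := hY q
      have hbv : b * (c * f q + d * g q) = d * (a * f q + b * g q) := by
        linear_combination f q * hdet
      have e1 : a * f (q+1) + b * g (q+1) =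
          ((a * f q + b * g q) * (lam * (r (q+1) - r 0 + α))) /
            ((r (q+1) - r 0) * (r (q+1) - r 0 + β)) := by
        rw [hfq, hgq]
        field_simp
        linear_combination (r (q+1) - r 0) * hbv
          - (a * f q + b * g q) * ((r (q+1) - r 0) * hlam + hαβ)
      rw [Finset.prod_range_succ, Finset.prod_range_succ, e1,
        cancel _ _ _ (mul_ne_zero h1 h2)]
      linear_combination (lam * (r (q+1) - r 0 + α)) * ih
  intro p hp
  obtain ⟨q, rfl⟩ : ∃ q, p = q + 1 := ⟨p - 1, by omega⟩
  have hfq : f (q+1) = (a * f q + b * g q) / (r (q+1) - r 0) := by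
    simpa using hf (q+1) (by omega)
  have hPα : (∏ i ∈ Finset.range (q+1), (r i - r 0 + α)) =
      (∏ i ∈ Finset.range q, (r (i+1) - r 0 + α)) * α := by
    rw [Finset.prod_range_succ']; simp
  have hPβ : (∏ i ∈ Finset.range (q+1), (r i - r 0 + β)) =
      (∏ i ∈ Finset.range q, (r (i+1) - r 0 + β)) * β := by
    rw [Finset.prod_range_succ']; simp
  have hPX : (∏ i ∈ Finset.range (q+1), (r (i+1) - r 0)) =
      (∏ i ∈ Finset.range q, (r (i+1) - r 0)) * (r (q+1) - r 0) :=
    Finset.prod_range_succ _ _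
  have hprod : (∏ i ∈ Finset.range q, ((r (i+1) - r 0) * (r (i+1) - r 0 + β))) =
      (∏ i ∈ Finset.range q, (r (i+1) - r 0)) * ∏ i ∈ Finset.range q, (r (i+1) - r 0 + β) :=
    Finset.prod_mul_distrib
  have hlamprod : (∏ i ∈ Finset.range q, (lam * (r (i+1) - r 0 + α))) =
      lam ^ q * ∏ i ∈ Finset.range q, (r (i+1) - r 0 + α) := by
    rw [Finset.prod_mul_distrib, Finset.prod_const, Finset.card_range]
  have hPXne : (∏ i ∈ Finset.range q, (r (i+1) - r 0)) ≠ 0 :=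
    Finset.prod_ne_zero_iff.mpr (fun i _ => hX i)
  have hPYne : (∏ i ∈ Finset.range q, (r (i+1) - r 0 + β)) ≠ 0 :=
    Finset.prod_ne_zero_iff.mpr (fun i _ => hY i)
  have keyq := key q
  rw [hprod, hlamprod] at keyq
  rw [hfq, hPα, hPβ, hPX]
  rw [div_eq_div_iff (hX q) (by
    exact mul_ne_zero (mul_ne_zero hPXne (hX q)) (mul_ne_zero hPYne hβ0))]
  have hthis : lam ^ (q+1) * α = lam ^ q * (a * β) := by rw [← hαβ]; ring
  linear_combination ((r (q+1) - r 0) * β) * keyq -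
    ((∏ i ∈ Finset.range q, (r (i+1) - r 0 + α)) * (r (q+1) - r 0)) * hthis
end

section
/- Let m : ℂ → ℂ and μ₁, μ₂ ∈ ℂ with m(p+μ₁−1) ≠ 0 and m(μ₂−1) ≠ 0 for all natural p; set r(p) := m(p+μ₁)/m(p+μ₁−1) and κ := m(μ₂)/m(μ₂−1), and β := r(0) − κ, assuming β ≠ 0, r(p) ≠ r(0) and r(p) ≠ κ for every p ≥ 1. Let a, b, c, d ∈ ℂ with b·c = a·d, λ := a + d ≠ 0, and α := aβ/λ. Define f₀ := 1, g₀ := 0 and, for p ≥ 1, f_p := (a·f_{p−1} + b·g_{p−1})/(r(p) − r(0)) and g_p := (c·f_{p−1} + d·g_{p−1})/(r(p) − κ). Then for every p ≥ 2: g_p = c·λ^{p−1} · ∏_{i=1}^{p−1}(r(i) − r(0) + α) / ( ∏_{i=1}^{p−1}(r(i) − r(0)) · ∏_{i=1}^{p}(r(i) − r(0) + β) ). -/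
/-- closed form of the coefficients `g_p` of the Floquet solution of the
planar system `z∂ₘy = (zA+B)y` with `B = diag(m(μ₁)/m(μ₁−1), m(μ₂)/m(μ₂−1))`,
`det A = 0` and `λ = a + d ≠ 0`:
`g_p = c·λ^{p−1}·∏_{i=1}^{p−1}(r(i)−r(0)+α) / (∏_{i=1}^{p−1}(r(i)−r(0))·∏_{i=1}^{p}(r(i)−r(0)+β))`
for `p ≥ 2`. -/
theorem stmt12 (m : ℂ → ℂ) (μ1 μ2 : ℂ)
    (hm1 : ∀ p : ℕ, m ((p : ℂ) + μ1 - 1) ≠ 0) (hm2 : m (μ2 - 1) ≠ 0)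
    (r : ℕ → ℂ) (hr : ∀ p : ℕ, r p = m ((p : ℂ) + μ1) / m ((p : ℂ) + μ1 - 1))
    (κ : ℂ) (hκ : κ = m μ2 / m (μ2 - 1))
    (β : ℂ) (hβ : β = r 0 - κ) (hβ0 : β ≠ 0)
    (hne1 : ∀ p : ℕ, 1 ≤ p → r p ≠ r 0) (hne2 : ∀ p : ℕ, 1 ≤ p → r p ≠ κ)
    (a b c d : ℂ) (hdet : b * c = a * d)
    (lam : ℂ) (hlam : lam = a + d) (hlam0 : lam ≠ 0)
    (α : ℂ) (hα : α = a * β / lam)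
    (f g : ℕ → ℂ) (hf0 : f 0 = 1) (hg0 : g 0 = 0)
    (hf : ∀ p : ℕ, 1 ≤ p → f p = (a * f (p - 1) + b * g (p - 1)) / (r p - r 0))
    (hg : ∀ p : ℕ, 1 ≤ p → g p = (c * f (p - 1) + d * g (p - 1)) / (r p - κ)) :
    ∀ p : ℕ, 2 ≤ p →
      g p = c * lam ^ (p - 1) * (∏ i ∈ Finset.range (p - 1), (r (i + 1) - r 0 + α)) /
        ((∏ i ∈ Finset.range (p - 1), (r (i + 1) - r 0)) *
          ∏ i ∈ Finset.range p, (r (i + 1) - r 0 + β)) := by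
  -- nonvanishing facts
  have hX : ∀ i : ℕ, r (i + 1) - r 0 ≠ 0 := fun i =>
    sub_ne_zero.mpr (hne1 (i + 1) (Nat.le_add_left 1 i))
  have hXβ : ∀ i : ℕ, r (i + 1) - r 0 + β ≠ 0 := by
    intro i
    have : r (i + 1) - r 0 + β = r (i + 1) - κ := by rw [hβ]; ring
    rw [this]
    exact sub_ne_zero.mpr (hne2 (i + 1) (Nat.le_add_left 1 i))
  have hP0 : ∀ p : ℕ, (∏ i ∈ Finset.range p, (r (i + 1) - r 0)) ≠ 0 := fun p =>
    Finset.prod_ne_zero_iff.mpr fun i _ => hX i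
  have hPβ : ∀ p : ℕ, (∏ i ∈ Finset.range p, (r (i + 1) - r 0 + β)) ≠ 0 := fun p =>
    Finset.prod_ne_zero_iff.mpr fun i _ => hXβ i
  have haβ : a * β = lam * α := by
    rw [hα]; field_simp
  -- closed form for V p = c * f p + d * g p
  have key : ∀ p : ℕ, c * f p + d * g p =
      c * lam ^ p * (∏ i ∈ Finset.range p, (r (i + 1) - r 0 + α)) /
        ((∏ i ∈ Finset.range p, (r (i + 1) - r 0)) *
          ∏ i ∈ Finset.range p, (r (i + 1) - r 0 + β)) := by
    intro p
    induction p with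
    | zero => simp [hf0, hg0]
    | succ p ih =>
      have hfp := hf (p + 1) (Nat.le_add_left 1 p)
      have hgp := hg (p + 1) (Nat.le_add_left 1 p)
      simp only [Nat.add_sub_cancel] at hfp hgp
      have hκβ : r (p + 1) - κ = r (p + 1) - r 0 + β := by rw [hβ]; ring
      have hcV : c * (a * f p + b * g p) = a * (c * f p + d * g p) := by
        linear_combination g p * hdet
      have h1 := hX p
      have h2 := hXβ p
      have h3 := hP0 p
      have h4 := hPβ p
      have step : ∀ Q P0 Pα Pβ X : ℂ, X ≠ 0 → X + β ≠ 0 → P0 ≠ 0 → Pβ ≠ 0 →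
          a * (c * Q * Pα / (P0 * Pβ)) / X + d * (c * Q * Pα / (P0 * Pβ)) / (X + β) =
            c * (Q * lam) * (Pα * (X + α)) / (P0 * X * (Pβ * (X + β))) := by
        intro Q P0 Pα Pβ X hX0 hXβ0 hP00 hPβ0
        rw [hα]
        field_simp
        rw [hlam]
        ring
      rw [hfp, hgp, hκβ, ← mul_div_assoc, ← mul_div_assoc, hcV, ih,
        Finset.prod_range_succ, Finset.prod_range_succ, Finset.prod_range_succ, pow_succ]
      exact step _ _ _ _ _ h1 h2 h3 h4
  -- conclude
  intro p hp
  obtain ⟨q, rfl⟩ : ∃ q, p = q + 1 := ⟨p - 1, (Nat.succ_pred_eq_of_pos (by omega)).symm⟩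
  have hgp := hg (q + 1) (Nat.le_add_left 1 q)
  simp only [Nat.add_sub_cancel] at hgp ⊢
  have hκβ : r (q + 1) - κ = r (q + 1) - r 0 + β := by rw [hβ]; ring
  rw [hgp, key q, hκβ, Finset.prod_range_succ]
  have h2 := hXβ q
  have h3 := hP0 q
  have h4 := hPβ q
  rw [div_div]
  congr 1
  ring
end

section
/- Let m : ℂ → ℂ and μ₁, μ₂ ∈ ℂ with m(p+μ₁−1) ≠ 0 and m(μ₂−1) ≠ 0 for all natural p; set r(p) := m(p+μ₁)/m(p+μ₁−1), κ := m(μ₂)/m(μ₂−1) and β := r(0) − κ, assuming β ≠ 0, r(p) ≠ r(0) and r(p) ≠ κ for every p ≥ 1. Let a, b, c, d ∈ ℂ with b·c = a·d and a + d = 0 (traceless, determinant-zero A). Define f₀ := 1, g₀ := 0 and, for p ≥ 1, f_p := (a·f_{p−1} + b·g_{p−1})/(r(p) − r(0)) and g_p := (c·f_{p−1} + d·g_{p−1})/(r(p) − κ). Then for every p ≥ 2: f_p = a^p·β^{p−1} / ( ∏_{i=1}^{p}(r(i) − r(0)) · ∏_{i=1}^{p−1}(r(i) − r(0) + β) ) and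 g_p = c·a^{p−1}·β^{p−1} / ( ∏_{i=1}^{p−1}(r(i) − r(0)) · ∏_{i=1}^{p}(r(i) − r(0) + β) ). -/
/-- closed form of the coefficients `(f_p, g_p)` of the Floquet solution
of the planar system `z∂ₘy = (zA+B)y` with `B = diag(m(μ₁)/m(μ₁−1), m(μ₂)/m(μ₂−1))`,
`det A = 0` and `λ = a + d = 0`:
`f_p = a^p·β^{p−1}/(∏_{i=1}^{p}(r(i)−r(0))·∏_{i=1}^{p−1}(r(i)−r(0)+β))` and
`g_p = c·a^{p−1}·β^{p−1}/(∏_{i=1}^{p−1}(r(i)−r(0))·∏_{i=1}^{p}(r(i)−r(0)+β))`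
for `p ≥ 2`. -/
theorem stmt13 (m : ℂ → ℂ) (μ1 μ2 : ℂ)
    (hm1 : ∀ p : ℕ, m ((p : ℂ) + μ1 - 1) ≠ 0) (hm2 : m (μ2 - 1) ≠ 0)
    (r : ℕ → ℂ) (hr : ∀ p : ℕ, r p = m ((p : ℂ) + μ1) / m ((p : ℂ) + μ1 - 1))
    (κ : ℂ) (hκ : κ = m μ2 / m (μ2 - 1))
    (β : ℂ) (hβ : β = r 0 - κ) (hβ0 : β ≠ 0)
    (hne1 : ∀ p : ℕ, 1 ≤ p → r p ≠ r 0) (hne2 : ∀ p : ℕ, 1 ≤ p → r p ≠ κ)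
    (a b c d : ℂ) (hdet : b * c = a * d) (htr : a + d = 0)
    (f g : ℕ → ℂ) (hf0 : f 0 = 1) (hg0 : g 0 = 0)
    (hf : ∀ p : ℕ, 1 ≤ p → f p = (a * f (p - 1) + b * g (p - 1)) / (r p - r 0))
    (hg : ∀ p : ℕ, 1 ≤ p → g p = (c * f (p - 1) + d * g (p - 1)) / (r p - κ)) :
    ∀ p : ℕ, 2 ≤ p →
      f p = a ^ p * β ^ (p - 1) /
        ((∏ i ∈ Finset.range p, (r (i + 1) - r 0)) *
          ∏ i ∈ Finset.range (p - 1), (r (i + 1) - r 0 + β)) ∧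
      g p = c * a ^ (p - 1) * β ^ (p - 1) /
        ((∏ i ∈ Finset.range (p - 1), (r (i + 1) - r 0)) *
          ∏ i ∈ Finset.range p, (r (i + 1) - r 0 + β)) := by
  have hd : d = -a := by linear_combination htr
  subst hd
  have hbc : b * c = -(a * a) := by linear_combination hdet
  have hκ' : κ = r 0 - β := by linear_combination hβ
  subst hκ'
  have hP : ∀ p : ℕ, 1 ≤ p → r p - r 0 ≠ 0 := fun p hp => sub_ne_zero.mpr (hne1 p hp)
  have hQ : ∀ p : ℕ, 1 ≤ p → r p - r 0 + β ≠ 0 := by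
    intro p hp
    have h2 := sub_ne_zero.mpr (hne2 p hp)
    intro h; apply h2; linear_combination h
  have hPn : ∀ p : ℕ, (∏ i ∈ Finset.range p, (r (i + 1) - r 0)) ≠ 0 := by
    intro p
    exact Finset.prod_ne_zero_iff.mpr (fun i _ => hP (i+1) (Nat.le_add_left 1 i))
  have hQn : ∀ p : ℕ, (∏ i ∈ Finset.range p, (r (i + 1) - r 0 + β)) ≠ 0 := by
    intro p
    exact Finset.prod_ne_zero_iff.mpr (fun i _ => hQ (i+1) (Nat.le_add_left 1 i))
  have claim : ∀ q : ℕ,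
      f (q+1) = a ^ (q+1) * β ^ q /
        ((∏ i ∈ Finset.range (q+1), (r (i + 1) - r 0)) *
          ∏ i ∈ Finset.range q, (r (i + 1) - r 0 + β)) ∧
      g (q+1) = c * a ^ q * β ^ q /
        ((∏ i ∈ Finset.range q, (r (i + 1) - r 0)) *
          ∏ i ∈ Finset.range (q+1), (r (i + 1) - r 0 + β)) := by
    intro q
    induction q with
    | zero =>
      constructor
      · rw [hf 1 le_rfl]
        simp [hf0, hg0]
      · rw [hg 1 le_rfl]
        simp only [hf0, hg0, Finset.prod_range_one, Finset.prod_range_zero, pow_zero,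
          mul_one, mul_zero, add_zero, one_mul, Nat.sub_self, zero_add]
        rw [show r 1 - (r 0 - β) = r 1 - r 0 + β by ring]
    | succ q ih =>
      obtain ⟨ihf, ihg⟩ := ih
      set p1 := ∏ i ∈ Finset.range q, (r (i + 1) - r 0) with hp1
      set q1 := ∏ i ∈ Finset.range q, (r (i + 1) - r 0 + β) with hq1
      have hx : r (q+1) - r 0 ≠ 0 := hP (q+1) (by omega)
      have hy : r (q+1) - r 0 + β ≠ 0 := hQ (q+1) (by omega)
      have hz : r (q+2) - r 0 ≠ 0 := hP (q+2) (by omega)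
      have hw : r (q+2) - r 0 + β ≠ 0 := hQ (q+2) (by omega)
      have hp1n : p1 ≠ 0 := hPn q
      have hq1n : q1 ≠ 0 := hQn q
      have eP : (∏ i ∈ Finset.range (q+1), (r (i + 1) - r 0)) = p1 * (r (q+1) - r 0) :=
        Finset.prod_range_succ _ _
      have eQ : (∏ i ∈ Finset.range (q+1), (r (i + 1) - r 0 + β)) = q1 * (r (q+1) - r 0 + β) :=
        Finset.prod_range_succ _ _
      have eP2 : (∏ i ∈ Finset.range (q+2), (r (i + 1) - r 0)) =
          p1 * (r (q+1) - r 0) * (r (q+2) - r 0) := by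
        rw [Finset.prod_range_succ, eP]
      have eQ2 : (∏ i ∈ Finset.range (q+2), (r (i + 1) - r 0 + β)) =
          q1 * (r (q+1) - r 0 + β) * (r (q+2) - r 0 + β) := by
        rw [Finset.prod_range_succ, eQ]
      set X := p1 * (r (q+1) - r 0) * q1 with hX
      set Y := p1 * (q1 * (r (q+1) - r 0 + β)) with hY
      have hXn : X ≠ 0 := mul_ne_zero (mul_ne_zero hp1n hx) hq1n
      have hYn : Y ≠ 0 := mul_ne_zero hp1n (mul_ne_zero hq1n hy)
      have ihf' : f (q+1) = a ^ (q+1) * β ^ q / X := by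
        rw [ihf, eP, hX]
      have ihg' : g (q+1) = c * a ^ q * β ^ q / Y := by
        rw [ihg, eQ]
      have hnum1 : a * (a ^ (q+1) * β ^ q) * Y + X * (b * (c * a ^ q * β ^ q)) =
          a ^ (q+2) * β ^ (q+1) * (p1 * q1) := by
        simp only [hX, hY]
        linear_combination (p1 * (r (q+1) - r 0) * q1 * a ^ q * β ^ q) * hbc
      have hnum2 : c * (a ^ (q+1) * β ^ q) * Y + X * (-a * (c * a ^ q * β ^ q)) =
          c * a ^ (q+1) * β ^ (q+1) * (p1 * q1) := by
        simp only [hX, hY]; ring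
      have step1 : a * f (q+1) + b * g (q+1) =
          (a ^ (q+2) * β ^ (q+1) * (p1 * q1)) / (X * Y) := by
        rw [ihf', ihg', mul_div_assoc', mul_div_assoc', div_add_div _ _ hXn hYn, hnum1]
      have step2 : c * f (q+1) + -a * g (q+1) =
          (c * a ^ (q+1) * β ^ (q+1) * (p1 * q1)) / (X * Y) := by
        rw [ihf', ihg', mul_div_assoc', mul_div_assoc', div_add_div _ _ hXn hYn, hnum2]
      constructor
      · rw [hf (q+2) (by omega)]
        rw [show q + 2 - 1 = q + 1 from rfl, step1, eP2, eQ, div_div,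
          div_eq_div_iff (mul_ne_zero (mul_ne_zero hXn hYn) hz)
          (mul_ne_zero (mul_ne_zero (mul_ne_zero hp1n hx) hz) (mul_ne_zero hq1n hy))]
        simp only [hX, hY]; ring
      · rw [hg (q+2) (by omega)]
        rw [show r (q+2) - (r 0 - β) = r (q+2) - r 0 + β by ring]
        rw [show q + 2 - 1 = q + 1 from rfl, step2, eP, eQ2, div_div,
          div_eq_div_iff (mul_ne_zero (mul_ne_zero hXn hYn) hw)
          (mul_ne_zero (mul_ne_zero hp1n hx) (mul_ne_zero (mul_ne_zero hq1n hy) hw))]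
        simp only [hX, hY]; ring
  intro p hp
  obtain ⟨q, rfl⟩ : ∃ q, p = q + 1 := ⟨p - 1, by omega⟩
  simpa only [Nat.add_sub_cancel] using claim q
end

section
/- Let q > 1 be real, n ≥ 1, A, B n×n complex matrices, and μ ∈ ℂ. For w ∈ ℂ write [w]_q := (q^w − 1)/(q−1) with q^w := exp(w·ln q). Assume s₀ ∈ ℂⁿ satisfies B·s₀ = [μ]_q·s₀, that for every p ≥ 1 the matrix [p+μ]_q·I − B is invertible, and that there exists C > 0 with ‖([p+μ]_q·I − B)⁻¹‖ ≤ C for all p ≥ 1 (operator norm induced by the Euclidean norm). Define s_p := ([p+μ]_q·I − B)⁻¹·A·s_{p−1} for p ≥ 1. Then there exists r > 0 such that for every z ∈ ℂ ∖ (−∞,0] with 0 < |z| < r the series y(z) := Σ_{p≥0} s_p·z^{p+μ} (with z^{p+μ} the principal-branch complex power) converges absolutely, and for every z ∈ ℂ ∖ (−∞,0] with 0 < |z| < r/q one has (y(qz) − y(z))/(q − 1) = (z·A + B)·y(z); equivalently, z·D_q y(z) = (zA + B)·y(z), where D_q y(z) := (y(qz) − y(z))/((q−1)z) is the Jackson q-derivative.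 -/
lemma vecNorm_smul {n : ℕ} (c : ℂ) (v : Fin n → ℂ) :
    vecNorm (c • v) = ‖c‖ * vecNorm v := by
  unfold vecNorm
  rw [WithLp.equiv_symm_apply, WithLp.toLp_smul, norm_smul]

lemma summable_of_vecNorm {n : ℕ} {f : ℕ → Fin n → ℂ}
    (h : Summable fun p => vecNorm (f p)) : Summable f := by
  have h1 : Summable (fun p => (WithLp.equiv 2 (Fin n → ℂ)).symm (f p)) :=
    Summable.of_norm h
  have h2 := h1.map
    ((PiLp.continuousLinearEquiv 2 ℂ (fun _ : Fin n => ℂ)) :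
      EuclideanSpace ℂ (Fin n) →L[ℂ] (Fin n → ℂ))
    (ContinuousLinearMap.continuous _)
  exact h2

lemma mul_cpow_pos {r : ℝ} (hr : 0 < r) {z : ℂ} (hz : z ≠ 0) (w : ℂ) :
    ((r : ℂ) * z) ^ w = (r : ℂ) ^ w * z ^ w := by
  have hr' : (r : ℂ) ≠ 0 := by exact_mod_cast hr.ne'
  rw [Complex.cpow_def_of_ne_zero (mul_ne_zero hr' hz),
    Complex.cpow_def_of_ne_zero hr', Complex.cpow_def_of_ne_zero hz,
    Complex.log_ofReal_mul hr hz, add_mul, Complex.exp_add, Complex.ofReal_log hr.le]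

/-- `mulVec` as a continuous linear map on `ℂⁿ`. -/
noncomputable def matCLM {n : ℕ} (M : Matrix (Fin n) (Fin n) ℂ) :
    (Fin n → ℂ) →L[ℂ] (Fin n → ℂ) :=
  LinearMap.toContinuousLinearMap M.mulVecLin

lemma matCLM_apply {n : ℕ} (M : Matrix (Fin n) (Fin n) ℂ) (v : Fin n → ℂ) :
    matCLM M v = M.mulVec v := rfl

/-- for `q > 1` and `[w]_q = (q^w − 1)/(q − 1)`, if `B·s₀ = [μ]_q·s₀`, the
matrices `[p+μ]_q·I − B` are invertible with uniformly bounded inverses, and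
`s_p = ([p+μ]_q·I − B)⁻¹·A·s_{p−1}`, then there is `r > 0` such that the Floquet series
`y(z) = Σ s_p·z^{p+μ}` converges absolutely for `z` in the slit plane with `0 < |z| < r`
and satisfies the `q`-hypergeometric system `(y(qz) − y(z))/(q−1) = (zA+B)·y(z)`,
i.e. `z·D_q y = (zA+B)·y` with `D_q` the Jackson `q`-derivative. -/
theorem stmt17 (q : ℝ) (hq : 1 < q) (n : ℕ) (hn : 1 ≤ n)
    (A B : Matrix (Fin n) (Fin n) ℂ) (μ : ℂ)
    (br : ℂ → ℂ) (hbr : ∀ w : ℂ, br w = ((q : ℂ) ^ w - 1) / ((q : ℂ) - 1))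
    (s : ℕ → Fin n → ℂ)
    (hs0 : B.mulVec (s 0) = br μ • s 0)
    (hinv : ∀ p : ℕ, 1 ≤ p →
      IsUnit (br ((p : ℂ) + μ) • (1 : Matrix (Fin n) (Fin n) ℂ) - B))
    (C : ℝ) (hC : 0 < C)
    (hbound : ∀ p : ℕ, 1 ≤ p →
      matNorm ((br ((p : ℂ) + μ) • (1 : Matrix (Fin n) (Fin n) ℂ) - B)⁻¹) ≤ C)
    (hs : ∀ p : ℕ, 1 ≤ p →
      s p = (br ((p : ℂ) + μ) • (1 : Matrix (Fin n) (Fin n) ℂ) - B)⁻¹.mulVec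
        (A.mulVec (s (p - 1)))) :
    ∃ rad : ℝ, 0 < rad ∧
      (∀ z : ℂ, z ∈ Complex.slitPlane → 0 < ‖z‖ → ‖z‖ < rad →
        Summable (fun p : ℕ => vecNorm ((z ^ ((p : ℂ) + μ)) • s p))) ∧
      (∀ z : ℂ, z ∈ Complex.slitPlane → 0 < ‖z‖ → ‖z‖ < rad / q →
        (∑' p : ℕ, (((q : ℂ) * z) ^ ((p : ℂ) + μ)) • s p) -
          (∑' p : ℕ, (z ^ ((p : ℂ) + μ)) • s p) =
        ((q : ℂ) - 1) • ((z • A + B).mulVec (∑' p : ℕ, (z ^ ((p : ℂ) + μ)) • s p))) := by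
  have hq0 : (0 : ℝ) < q := lt_trans one_pos hq
  set K : ℝ := C * matNorm A with hKdef
  have hKnn : 0 ≤ K := mul_nonneg hC.le (norm_nonneg _)
  -- norm recursion
  have hrec : ∀ p : ℕ, vecNorm (s p) ≤ K ^ p * vecNorm (s 0) := by
    intro p
    induction p with
    | zero => simp
    | succ p ih =>
      have h1 : vecNorm (s (p + 1)) ≤ K * vecNorm (s p) := by
        rw [hs (p + 1) (by omega)]
        simp only [Nat.add_sub_cancel]
        calc vecNorm ((br (((p + 1 : ℕ) : ℂ) + μ) •
              (1 : Matrix (Fin n) (Fin n) ℂ) - B)⁻¹.mulVec (A.mulVec (s p)))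
            ≤ matNorm ((br (((p + 1 : ℕ) : ℂ) + μ) •
                (1 : Matrix (Fin n) (Fin n) ℂ) - B)⁻¹) * vecNorm (A.mulVec (s p)) :=
              vecNorm_mulVec_le _ _
          _ ≤ C * (matNorm A * vecNorm (s p)) :=
              mul_le_mul (hbound (p + 1) (by omega)) (vecNorm_mulVec_le _ _)
                (vecNorm_nonneg _) hC.le
          _ = K * vecNorm (s p) := by rw [hKdef]; ring
      calc vecNorm (s (p + 1)) ≤ K * vecNorm (s p) := h1
        _ ≤ K * (K ^ p * vecNorm (s 0)) := mul_le_mul_of_nonneg_left ih hKnn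
        _ = K ^ (p + 1) * vecNorm (s 0) := by ring
  set rad : ℝ := 1 / (K + 1) with hraddef
  have hradpos : 0 < rad := by rw [hraddef]; positivity
  -- key summability fact
  have hsum : ∀ z : ℂ, z ≠ 0 → ‖z‖ < rad →
      Summable (fun p : ℕ => vecNorm ((z ^ ((p : ℂ) + μ)) • s p)) := by
    intro z hz hzr
    have hK1 : (0 : ℝ) < K + 1 := by linarith
    rw [hraddef, lt_div_iff₀ hK1] at hzr
    have habs : ‖z‖ * K < 1 := by
      nlinarith [norm_nonneg z]
    have hgeo : Summable
        (fun p : ℕ => (‖z ^ μ‖ * vecNorm (s 0)) * (‖z‖ * K) ^ p) :=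
      (summable_geometric_of_lt_one (by positivity) habs).mul_left _
    refine hgeo.of_nonneg_of_le (fun p => vecNorm_nonneg _) (fun p => ?_)
    have hzw : z ^ ((p : ℂ) + μ) = z ^ (p : ℕ) * z ^ μ := by
      rw [Complex.cpow_add _ _ hz, Complex.cpow_natCast]
    rw [vecNorm_smul, hzw, norm_mul, norm_pow]
    calc ‖z‖ ^ p * ‖z ^ μ‖ * vecNorm (s p)
        ≤ ‖z‖ ^ p * ‖z ^ μ‖ * (K ^ p * vecNorm (s 0)) :=
          mul_le_mul_of_nonneg_left (hrec p) (by positivity)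
      _ = (‖z ^ μ‖ * vecNorm (s 0)) * (‖z‖ * K) ^ p := by ring
  refine ⟨rad, hradpos, fun z _ hpos hlt => hsum z (norm_pos_iff.mp hpos) hlt, ?_⟩
  intro z hslit hpos hlt
  have hz : z ≠ 0 := norm_pos_iff.mp hpos
  have hqz : (q : ℂ) * z ≠ 0 := mul_ne_zero (by exact_mod_cast hq0.ne') hz
  have hzrad : ‖z‖ < rad :=
    lt_of_lt_of_le hlt (div_le_self hradpos.le hq.le)
  have hqzrad : ‖(q : ℂ) * z‖ < rad := by
    rw [norm_mul, Complex.norm_real, Real.norm_eq_abs, abs_of_pos hq0]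
    rw [lt_div_iff₀ hq0] at hlt
    linarith [mul_comm q (‖z‖)]
  set t : ℕ → Fin n → ℂ := fun p => (z ^ ((p : ℂ) + μ)) • s p with htdef
  have T : Summable t := summable_of_vecNorm (hsum z hz hzrad)
  have T' : Summable (fun p : ℕ => (((q : ℂ) * z) ^ ((p : ℂ) + μ)) • s p) :=
    summable_of_vecNorm (hsum _ hqz hqzrad)
  have hqC : ((q : ℂ) - 1) ≠ 0 := by
    rw [sub_ne_zero]
    exact_mod_cast hq.ne'
  have hbr' : ∀ w : ℂ, ((q : ℂ) - 1) * br w = (q : ℂ) ^ w - 1 := by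
    intro w; rw [hbr w]; field_simp
  have hterm : ∀ p : ℕ, (((q : ℂ) * z) ^ ((p : ℂ) + μ)) • s p - t p
      = ((q : ℂ) - 1) • (br ((p : ℂ) + μ) • t p) := by
    intro p
    simp only [htdef]
    rw [mul_cpow_pos hq0 hz, smul_smul, smul_smul, ← sub_smul]
    congr 1
    rw [hbr' ((p : ℂ) + μ)]
    ring
  -- the recursion identity
  have hkey : ∀ p : ℕ, 1 ≤ p →
      br ((p : ℂ) + μ) • s p = B.mulVec (s p) + A.mulVec (s (p - 1)) := by
    intro p hp
    have hud := (Matrix.isUnit_iff_isUnit_det _).mp (hinv p hp)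
    have h1 : (br ((p : ℂ) + μ) • (1 : Matrix (Fin n) (Fin n) ℂ) - B).mulVec (s p)
        = A.mulVec (s (p - 1)) := by
      rw [hs p hp, Matrix.mulVec_mulVec, Matrix.mul_nonsing_inv _ hud, Matrix.one_mulVec]
    rw [Matrix.sub_mulVec, Matrix.smul_mulVec, Matrix.one_mulVec,
      sub_eq_iff_eq_add] at h1
    rw [h1, add_comm]
  -- splitting the terms
  set w : ℕ → Fin n → ℂ :=
    fun p => Nat.casesOn p 0 (fun k => z • ((z ^ ((k : ℂ) + μ)) • A.mulVec (s k)))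
    with hwdef
  have hw0 : w 0 = 0 := rfl
  have hwsucc : ∀ k : ℕ, w (k + 1) = z • ((z ^ ((k : ℂ) + μ)) • A.mulVec (s k)) :=
    fun k => rfl
  have hsplit : ∀ p : ℕ, br ((p : ℂ) + μ) • t p
      = (z ^ ((p : ℂ) + μ)) • B.mulVec (s p) + w p := by
    intro p
    cases p with
    | zero =>
      simp only [htdef, hw0, Nat.cast_zero, zero_add, add_zero]
      rw [smul_comm, hs0]
    | succ k =>
      have hk1 := hkey (k + 1) (by omega)
      simp only [Nat.add_sub_cancel] at hk1
      rw [htdef]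
      calc br (((k + 1 : ℕ) : ℂ) + μ) • ((z ^ (((k + 1 : ℕ) : ℂ) + μ)) • s (k + 1))
          = (z ^ (((k + 1 : ℕ) : ℂ) + μ)) • (br (((k + 1 : ℕ) : ℂ) + μ) • s (k + 1)) :=
            smul_comm _ _ _
        _ = (z ^ (((k + 1 : ℕ) : ℂ) + μ)) • (B.mulVec (s (k + 1)) + A.mulVec (s k)) := by
            rw [hk1]
        _ = (z ^ (((k + 1 : ℕ) : ℂ) + μ)) • B.mulVec (s (k + 1))
              + (z ^ (((k + 1 : ℕ) : ℂ) + μ)) • A.mulVec (s k) := smul_add _ _ _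
        _ = (z ^ (((k + 1 : ℕ) : ℂ) + μ)) • B.mulVec (s (k + 1)) + w (k + 1) := by
            rw [hwsucc k, smul_smul]
            congr 2
            have hcast : (((k + 1 : ℕ) : ℂ)) + μ = 1 + ((k : ℂ) + μ) := by push_cast; ring
            rw [hcast, Complex.cpow_add _ _ hz, Complex.cpow_one]
  -- summability of the pieces
  have hu' : (fun p : ℕ => (z ^ ((p : ℂ) + μ)) • B.mulVec (s p))
      = fun p => matCLM B (t p) := by
    funext p
    rw [matCLM_apply, htdef, Matrix.mulVec_smul]
  have TU : Summable (fun p : ℕ => (z ^ ((p : ℂ) + μ)) • B.mulVec (s p)) := by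
    rw [hu']
    exact T.map (matCLM B) (matCLM B).continuous
  have hw1 : (fun p : ℕ => w (p + 1)) = fun p => (z • matCLM A) (t p) := by
    funext p
    rw [hwsucc p]
    show z • ((z ^ ((p : ℂ) + μ)) • A.mulVec (s p)) = z • matCLM A (t p)
    rw [matCLM_apply, htdef, Matrix.mulVec_smul]
  have TW : Summable w := by
    rw [← summable_nat_add_iff 1, hw1]
    exact T.map (z • matCLM A) (z • matCLM A).continuous
  have TB : Summable (fun p : ℕ => br ((p : ℂ) + μ) • t p) :=
    (TU.add TW).congr fun p => (hsplit p).symm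
  -- assembling
  have E2 : ∑' p : ℕ, br ((p : ℂ) + μ) • t p
      = B.mulVec (∑' p : ℕ, t p) + z • A.mulVec (∑' p : ℕ, t p) := by
    rw [tsum_congr hsplit, Summable.tsum_add TU TW]
    congr 1
    · rw [hu', ← (matCLM B).map_tsum T, matCLM_apply]
    · rw [Summable.tsum_eq_zero_add TW, hw0, zero_add]
      rw [hw1, ← (z • matCLM A).map_tsum T]
      rw [ContinuousLinearMap.smul_apply, matCLM_apply]
  calc (∑' p : ℕ, (((q : ℂ) * z) ^ ((p : ℂ) + μ)) • s p) - (∑' p : ℕ, t p)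
      = ∑' p : ℕ, ((((q : ℂ) * z) ^ ((p : ℂ) + μ)) • s p - t p) := (Summable.tsum_sub T' T).symm
    _ = ∑' p : ℕ, ((q : ℂ) - 1) • (br ((p : ℂ) + μ) • t p) := tsum_congr hterm
    _ = ((q : ℂ) - 1) • ∑' p : ℕ, br ((p : ℂ) + μ) • t p := Summable.tsum_const_smul _ TB
    _ = ((q : ℂ) - 1) • ((z • A + B).mulVec (∑' p : ℕ, t p)) := by
        rw [E2, Matrix.add_mulVec, Matrix.smul_mulVec, add_comm]
end

section
/- Let μ and p be positive integers and let C_k denote the k-th Catalan number C_k = (2k)!/((k+1)!·k!). Then, working in ℚ: (i) C_{k}/C_{k−1} = 4 − 6/(k+1) for every k ≥ 1, and hence C_{p+μ}/C_{p+μ−1} − C_μ/C_{μ−1} = 6p/((μ+1)(p+μ+1)); (ii) the quantity N(p) := (1/(36p²))·(μ+1)(p+μ+1)·((μ+1)(p+μ+1) + 6p), which equals the operator 1-norm of the inverse of (C_{p+μ}/C_{p+μ−1})·I − B for B = [[4 − 6/(μ+1), 1],[0, 4 − 6/(μ+1)]], satisfies N(p) ≤ N(1) = (1/36)·(μ+1)(μ+2)·((μ+1)(μ+2)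 + 6) for every p ≥ 1. -/
lemma cat_ratio (n : ℕ) :
    (catalan (n + 1) : ℚ) / (catalan n : ℚ) = 4 - 6 / ((n : ℚ) + 2) := by
  have h1 : (n + 1 + 1) * catalan (n + 1) = (n + 1).centralBinom :=
    succ_mul_catalan_eq_centralBinom (n + 1)
  have h2 : (n + 1) * (n + 1).centralBinom = 2 * (2 * n + 1) * n.centralBinom :=
    Nat.succ_mul_centralBinom_succ n
  have h3 : (n + 1) * catalan n = n.centralBinom := succ_mul_catalan_eq_centralBinom n
  have key : (n + 2) * catalan (n + 1) * (n + 1) = 2 * (2 * n + 1) * ((n + 1) * catalan n) := by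
    rw [h3]
    calc (n + 2) * catalan (n + 1) * (n + 1) = (n + 1) * ((n + 1 + 1) * catalan (n + 1)) := by ring
    _ = (n + 1) * (n + 1).centralBinom := by rw [h1]
    _ = 2 * (2 * n + 1) * n.centralBinom := h2
  have keyQ : ((n : ℚ) + 2) * (catalan (n + 1) : ℚ) * ((n : ℚ) + 1)
      = 2 * (2 * (n : ℚ) + 1) * (((n : ℚ) + 1) * (catalan n : ℚ)) := by
    exact_mod_cast key
  have hcn : catalan n ≠ 0 := by
    intro h
    have := succ_mul_catalan_eq_centralBinom n
    rw [h, mul_zero] at this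
    exact (Nat.centralBinom_pos n).ne' this.symm
  have hc : (catalan n : ℚ) ≠ 0 := by exact_mod_cast hcn
  have hn2 : ((n : ℚ) + 2) ≠ 0 := by positivity
  have hn1 : ((n : ℚ) + 1) ≠ 0 := by positivity
  field_simp
  nlinarith [keyQ]

/-- for the Catalan moment sequence `m(k) = C_k`, in `ℚ`:
(i) `C_k/C_{k−1} = 4 − 6/(k+1)` for `k ≥ 1`, hence
`C_{p+μ}/C_{p+μ−1} − C_μ/C_{μ−1} = 6p/((μ+1)(p+μ+1))`;
(ii) `N(k) := (1/(36k²))·(μ+1)(k+μ+1)·((μ+1)(k+μ+1)+6k)` — the operator 1-norm of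
the inverse of `(C_{k+μ}/C_{k+μ−1})·I − B` for `B = [[4−6/(μ+1),1],[0,4−6/(μ+1)]]` —
satisfies `N(1) = (1/36)·(μ+1)(μ+2)·((μ+1)(μ+2)+6)` and `N(k) ≤ N(1)` for all `k ≥ 1`,
verifying hypothesis (H2) in the Catalan example. -/
theorem stmt19 (μ p : ℕ) (hμ : 1 ≤ μ) (hp : 1 ≤ p)
    (N : ℕ → ℚ)
    (hN : ∀ k : ℕ, N k = (1 / (36 * (k : ℚ) ^ 2)) * ((μ : ℚ) + 1) * ((k : ℚ) + (μ : ℚ) + 1) *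
      (((μ : ℚ) + 1) * ((k : ℚ) + (μ : ℚ) + 1) + 6 * (k : ℚ))) :
    (∀ k : ℕ, 1 ≤ k →
      (catalan k : ℚ) / (catalan (k - 1) : ℚ) = 4 - 6 / ((k : ℚ) + 1)) ∧
    ((catalan (p + μ) : ℚ) / (catalan (p + μ - 1) : ℚ) -
        (catalan μ : ℚ) / (catalan (μ - 1) : ℚ) =
      6 * (p : ℚ) / (((μ : ℚ) + 1) * ((p : ℚ) + (μ : ℚ) + 1))) ∧
    (N 1 = (1 / 36) * ((μ : ℚ) + 1) * ((μ : ℚ) + 2) * (((μ : ℚ) + 1) * ((μ : ℚ) + 2) + 6)) ∧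
    (∀ k : ℕ, 1 ≤ k → N k ≤ N 1) := by
  have part1 : ∀ k : ℕ, 1 ≤ k →
      (catalan k : ℚ) / (catalan (k - 1) : ℚ) = 4 - 6 / ((k : ℚ) + 1) := by
    intro k hk
    obtain ⟨n, rfl⟩ := Nat.exists_eq_add_of_le' hk
    have := cat_ratio n
    simp only [Nat.add_sub_cancel]
    rw [this]
    push_cast
    ring_nf
  refine ⟨part1, ?_, ?_, ?_⟩
  · rw [part1 (p + μ) (le_trans hp (Nat.le_add_right _ _)), part1 μ hμ]
    have hμ1 : ((μ : ℚ) + 1) ≠ 0 := by positivity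
    have hpμ1 : ((p : ℚ) + (μ : ℚ) + 1) ≠ 0 := by positivity
    push_cast
    field_simp
    ring
  · rw [hN 1]; norm_num; ring
  · intro k hk
    rw [hN k, hN 1]
    have hx : (1 : ℚ) ≤ (k : ℚ) := by exact_mod_cast hk
    have hm : (1 : ℚ) ≤ (μ : ℚ) := by exact_mod_cast hμ
    have hk0 : (0 : ℚ) < (k : ℚ) := by linarith
    rw [div_mul_eq_mul_div, div_mul_eq_mul_div, div_mul_eq_mul_div,
        div_mul_eq_mul_div, div_mul_eq_mul_div, div_mul_eq_mul_div,
        div_le_div_iff₀ (by positivity) (by positivity)]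
    push_cast
    have h : (k:ℚ) + (μ:ℚ) + 1 ≤ (k:ℚ) * ((μ:ℚ)+2) := by nlinarith
    have hA : (0:ℚ) ≤ (k:ℚ) + (μ:ℚ) + 1 := by linarith
    have hsq : ((k:ℚ)+(μ:ℚ)+1)^2 ≤ ((k:ℚ)*((μ:ℚ)+2))^2 := by
      nlinarith [mul_le_mul h h hA (by positivity : (0:ℚ) ≤ (k:ℚ)*((μ:ℚ)+2))]
    have h1 : ((μ:ℚ)+1)^2 * ((k:ℚ)+(μ:ℚ)+1)^2 ≤ ((μ:ℚ)+1)^2 * ((k:ℚ)*((μ:ℚ)+2))^2 :=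
      mul_le_mul_of_nonneg_left hsq (by positivity)
    have h2 : 6*(k:ℚ)*((μ:ℚ)+1) * ((k:ℚ)+(μ:ℚ)+1) ≤ 6*(k:ℚ)*((μ:ℚ)+1) * ((k:ℚ)*((μ:ℚ)+2)) :=
      mul_le_mul_of_nonneg_left h (by positivity)
    nlinarith [h1, h2]
end
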